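/- Let V_1, V_2, … be iid standard Pareto random variables (P{V_i > x} = x^{−1} for x ≥ 1) and X_t^{(i)} := V_i^{γ_t} for a continuous function γ : [0,1] → (0,∞), so that U_t(n/k_n) = (n/k_n)^{γ_t} and a_t(n/k_n) = γ_t (n/k_n)^{γ_t}. Let Û*_{n,t}(n/k_n) := ⟨X^{(n−k_n:n)}_·⟩_{n,t} be the linear interpolation of the pointwise (n−k_n)-th order statistics, and note X^{(n−k_n:n)}_u = V_{n−k_n:n}^{γ_u} for each u. Assume that (k_n/n) V_{n−k_n:n} → 1 in probability, let c ∈ (0,1) be fixed, and for each n let j(n) ∈ {2,…,j_n} and t_n := t_{n,j(n)−1} + c (t_{n,j(n)} − t_{n,j(n)−1}). If log(n/k_n) · (γ_{t_n} − γ_{t_{n,j(n)−1}}) → −∞ as n → ∞, then (Û*_{n,t_n}(n/k_n) − U_{t_n}(n/k_n))/a_{t_n}(n/k_n) → +∞ in probability, i.e., P{(Û*_{n,t_n}(n/k_n) − U_{t_n}(n/k_n))/a_{t_n}(n/k_n) > K} → 1 for every K > 0; in particular, the interpolated estimator Û*_{n,·}(n/k_n) is not uniformly consistent. -/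

import Mathlib

open MeasureTheory ProbabilityTheory Filter Topology Set
open scoped Classical

noncomputable def linInterp (jn : ℕ) (t : ℕ → ℝ) (z : ℝ → ℝ) (x : ℝ) : ℝ :=
  if x ≤ t 1 then z (t 1)
  else if h : ∃ j, 2 ≤ j ∧ j ≤ jn ∧ t (j - 1) < x ∧ x ≤ t j then
    ((t (Nat.find h) - x) * z (t (Nat.find h - 1))
        + (x - t (Nat.find h - 1)) * z (t (Nat.find h)))
      / (t (Nat.find h) - t (Nat.find h - 1))
  else z (t jn)

private lemma grid_mono' {jn : ℕ} {t : ℕ → ℝ}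
    (htmono : ∀ j, 1 ≤ j → j < jn → t j < t (j + 1)) :
    ∀ i i' : ℕ, 1 ≤ i → i ≤ i' → i' ≤ jn → t i ≤ t i' := by
  intro i i' h1 h2 h3
  induction i' with
  | zero => omega
  | succ m ih =>
    rcases eq_or_lt_of_le h2 with h | h
    · exact le_of_eq (by rw [h])
    · exact (ih (by omega) (by omega)).trans (le_of_lt (htmono m (by omega) (by omega)))

private lemma linInterp_eq {jn : ℕ} {t : ℕ → ℝ}
    (htmono : ∀ j, 1 ≤ j → j < jn → t j < t (j + 1))
    (z : ℝ → ℝ) {J : ℕ} (hJ2 : 2 ≤ J) (hJjn : J ≤ jn)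
    {x : ℝ} (hx1 : t (J - 1) < x) (hx2 : x ≤ t J) :
    linInterp jn t z x
      = ((t J - x) * z (t (J - 1)) + (x - t (J - 1)) * z (t J)) / (t J - t (J - 1)) := by
  have hmono := grid_mono' htmono
  have h1 : ¬ x ≤ t 1 :=
    not_le.2 (lt_of_le_of_lt (hmono 1 (J - 1) le_rfl (by omega) (by omega)) hx1)
  have h : ∃ j, 2 ≤ j ∧ j ≤ jn ∧ t (j - 1) < x ∧ x ≤ t j := ⟨J, hJ2, hJjn, hx1, hx2⟩
  have hfind : Nat.find h = J := by
    rw [Nat.find_eq_iff]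
    refine ⟨⟨hJ2, hJjn, hx1, hx2⟩, ?_⟩
    rintro m hm ⟨hm2, hmjn, hmx1, hmx2⟩
    have : t m ≤ t (J - 1) := hmono m (J - 1) (by omega) (by omega) (by omega)
    linarith
  rw [linInterp, if_neg h1, dif_pos h, hfind]

/-- Example 1: in the Pareto model X_t = V^{γ_t}, if γ oscillates too
much relative to 1/log(n/kₙ) between a grid point and an interior point tₙ, then the
standardized error of the interpolated location estimator at tₙ tends to +∞ in
probability; in particular the interpolated estimator is not uniformly consistent. -/
theorem interpolated_location_estimator_inconsistent
    {Ω : Type*} [MeasurableSpace Ω] (P : Measure Ω) [IsProbabilityMeasure P]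
    (V : ℕ → Ω → ℝ)
    (hVmeas : ∀ i, Measurable (V i))
    (hVindep : iIndepFun V P)
    (hVsupp : ∀ i ω, 1 ≤ V i ω)
    (hVtail : ∀ i, ∀ x : ℝ, 1 ≤ x → (P {ω | x < V i ω}).toReal = x⁻¹)
    (γ : ℝ → ℝ) (hγcont : ContinuousOn γ (Icc 0 1))
    (hγpos : ∀ s ∈ Icc (0:ℝ) 1, 0 < γ s)
    (k : ℕ → ℕ) (hk : ∀ n, 1 ≤ n → 1 ≤ k n ∧ k n ≤ n)
    (hkinfty : Tendsto (fun n : ℕ => (k n : ℝ)) atTop atTop)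
    (hkn0 : Tendsto (fun n : ℕ => (k n : ℝ) / n) atTop (𝓝 0))
    -- grid
    (jn : ℕ → ℕ) (t : ℕ → ℕ → ℝ)
    (hjn : ∀ n, 2 ≤ jn n)
    (ht0 : ∀ n, t n 0 = 0) (htend : ∀ n, t n (jn n + 1) = 1)
    (htnonneg : ∀ n, 0 ≤ t n 1) (htle1 : ∀ n, t n (jn n) ≤ 1)
    (htmono : ∀ n j, 1 ≤ j → j < jn n → t n j < t n (j + 1))
    -- W n = V_{n-kₙ:n}, the (n-kₙ)-th order statistic of V 1, …, V n
    (W : ℕ → Ω → ℝ)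
    (hW : ∀ n ω, W n ω =
      sInf {x : ℝ | (n - k n : ℕ) ≤ ((Finset.Icc 1 n).filter (fun i => V i ω ≤ x)).card})
    -- assumption: (kₙ/n) V_{n-kₙ:n} → 1 in probability
    (hWconv : ∀ ε > 0, Tendsto
      (fun n : ℕ => P {ω | ε < |(k n : ℝ) / n * W n ω - 1|}) atTop (𝓝 0))
    -- the interior points tₙ = t_{n,j(n)-1} + c(t_{n,j(n)} - t_{n,j(n)-1})
    (c : ℝ) (hc : c ∈ Ioo (0:ℝ) 1)
    (j : ℕ → ℕ) (hj : ∀ n, 2 ≤ j n ∧ j n ≤ jn n)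
    (tn : ℕ → ℝ) (htn : ∀ n, tn n = t n (j n - 1) + c * (t n (j n) - t n (j n - 1)))
    -- log(n/kₙ) (γ_{tₙ} - γ_{t_{n,j(n)-1}}) → -∞
    (hdiv : Tendsto (fun n : ℕ =>
      Real.log ((n : ℝ) / (k n : ℝ)) * (γ (tn n) - γ (t n (j n - 1)))) atTop atBot) :
    -- conclusion: the standardized estimation error at tₙ tends to +∞ in probability
    ∀ K > 0, Tendsto
      (fun n : ℕ => P {ω |
        K < (linInterp (jn n) (t n) (fun u => W n ω ^ γ u) (tn n)
              - ((n : ℝ) / (k n : ℝ)) ^ γ (tn n))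
            / (γ (tn n) * ((n : ℝ) / (k n : ℝ)) ^ γ (tn n))})
      atTop (𝓝 1) := by
  intro K hK
  -- upper bound M for γ on [0,1]
  obtain ⟨C, hC⟩ := (isCompact_Icc : IsCompact (Icc (0:ℝ) 1)).exists_bound_of_continuousOn hγcont
  set M : ℝ := max C 1 with hMdef
  have hM1 : (1:ℝ) ≤ M := le_max_right _ _
  have hγle : ∀ s ∈ Icc (0:ℝ) 1, γ s ≤ M := fun s hs =>
    le_trans (le_trans (le_abs_self _) (hC s hs)) (le_max_left _ _)
  -- the bad events
  set B : ℕ → Set Ω := fun n => {ω | (1/2 : ℝ) < |(k n : ℝ) / n * W n ω - 1|} with hBdef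
  have hB : Tendsto (fun n => P (B n)) atTop (𝓝 0) := hWconv (1/2) one_half_pos
  -- n / kₙ → ∞
  have hr : Tendsto (fun n : ℕ => (n : ℝ) / (k n : ℝ)) atTop atTop := by
    have hpos : ∀ᶠ n : ℕ in atTop, (k n : ℝ) / n ∈ Ioi (0:ℝ) := by
      filter_upwards [eventually_ge_atTop 1] with n hn
      have h1 := (hk n hn).1
      have hk0 : (0:ℝ) < (k n : ℝ) := by exact_mod_cast Nat.lt_of_lt_of_le Nat.zero_lt_one h1
      have hn0 : (0:ℝ) < (n : ℝ) := by exact_mod_cast hn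
      exact div_pos hk0 hn0
    have h1 : Tendsto (fun n : ℕ => (k n : ℝ) / n) atTop (𝓝[>] 0) :=
      tendsto_nhdsWithin_of_tendsto_nhds_of_eventually_within _ hkn0 hpos
    have h2 := h1.inv_tendsto_nhdsGT_zero
    refine h2.congr fun n => ?_
    simp [inv_div]
  -- the exponential term → ∞
  have hneg : Tendsto (fun n : ℕ =>
      Real.log ((n : ℝ) / (k n : ℝ)) * (γ (t n (j n - 1)) - γ (tn n))) atTop atTop := by
    have h := (tendsto_neg_atBot_atTop).comp hdiv
    refine h.congr fun n => ?_
    simp only [Function.comp_apply]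
    ring
  have hE : Tendsto (fun n : ℕ =>
      Real.exp (Real.log ((n : ℝ) / (k n : ℝ)) * (γ (t n (j n - 1)) - γ (tn n))))
      atTop atTop := Real.tendsto_exp_atTop.comp hneg
  -- key eventual inclusion
  have hsub : ∀ᶠ n in atTop, (B n)ᶜ ⊆ {ω |
      K < (linInterp (jn n) (t n) (fun u => W n ω ^ γ u) (tn n)
            - ((n : ℝ) / (k n : ℝ)) ^ γ (tn n))
          / (γ (tn n) * ((n : ℝ) / (k n : ℝ)) ^ γ (tn n))} := by
    filter_upwards [hr.eventually_ge_atTop 2,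
      hE.eventually_gt_atTop ((K * M + 1) * (2:ℝ) ^ M / (1 - c)),
      eventually_ge_atTop 1] with n hR2 hEn hn1
    -- grid facts for this n
    have hj2 := (hj n).1
    have hjle := (hj n).2
    have hmono := grid_mono' (htmono n)
    set a : ℝ := t n (j n - 1) with ha
    set b : ℝ := t n (j n) with hb
    have hab : a < b := by
      have h := htmono n (j n - 1) (by omega) (by omega)
      rwa [show j n - 1 + 1 = j n by omega] at h
    have ha0 : 0 ≤ a := le_trans (htnonneg n) (hmono 1 (j n - 1) le_rfl (by omega) (by omega))
    have hb1 : b ≤ 1 := le_trans (hmono (j n) (jn n) (by omega) hjle le_rfl) (htle1 n)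
    have hcb : 0 < c * (b - a) := mul_pos hc.1 (sub_pos.2 hab)
    have hcb2 : 0 < (1 - c) * (b - a) := mul_pos (by linarith [hc.2]) (sub_pos.2 hab)
    have hax : a < tn n := by rw [htn n]; linarith
    have hxb : tn n < b := by rw [htn n]; nlinarith
    have hamem : a ∈ Icc (0:ℝ) 1 := ⟨ha0, le_trans hab.le hb1⟩
    have hbmem : b ∈ Icc (0:ℝ) 1 := ⟨le_trans ha0 hab.le, hb1⟩
    have htnmem : tn n ∈ Icc (0:ℝ) 1 := ⟨le_trans ha0 hax.le, le_trans hxb.le hb1⟩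
    -- γ values
    set g0 : ℝ := γ (tn n) with hg0def
    set g1 : ℝ := γ a with hg1def
    set g2 : ℝ := γ b with hg2def
    have hg0 : 0 < g0 := hγpos _ htnmem
    have hg0M : g0 ≤ M := hγle _ htnmem
    have hg1 : 0 < g1 := hγpos _ hamem
    have hg1M : g1 ≤ M := hγle _ hamem
    have hg2 : 0 < g2 := hγpos _ hbmem
    -- now the pointwise bound
    intro ω hω
    simp only [mem_compl_iff, hBdef, mem_setOf_eq, not_lt] at hω
    simp only [mem_setOf_eq]
    set R : ℝ := (n : ℝ) / (k n : ℝ) with hRdef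
    set s : ℝ := W n ω with hsdef
    have hR0 : (0:ℝ) < R := by linarith
    have hkR : (k n : ℝ) / n * R = 1 := by
      have h1 := (hk n hn1).1
      have hk0 : (0:ℝ) < (k n : ℝ) := by exact_mod_cast Nat.lt_of_lt_of_le Nat.zero_lt_one h1
      have hn0 : (0:ℝ) < (n : ℝ) := by exact_mod_cast hn1
      field_simp [hRdef]
      rw [hRdef]; field_simp
    have h12 : (1/2 : ℝ) ≤ (k n : ℝ) / n * s := by
      have := (abs_le.1 hω).1; linarith
    have hsR : R / 2 ≤ s := by
      calc R / 2 = (1/2) * R := by ring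
        _ ≤ ((k n : ℝ) / n * s) * R := mul_le_mul_of_nonneg_right h12 hR0.le
        _ = s * ((k n : ℝ) / n * R) := by ring
        _ = s := by rw [hkR, mul_one]
    have hs0 : (0:ℝ) < s := by linarith
    -- rewrite the interpolation
    have hinterp : linInterp (jn n) (t n) (fun u => s ^ γ u) (tn n)
        = (1 - c) * s ^ g1 + c * s ^ g2 := by
      rw [linInterp_eq (htmono n) _ hj2 hjle hax hxb.le]
      have hba : b - a ≠ 0 := sub_ne_zero.2 (ne_of_gt hab)
      simp only [← ha, ← hb]
      rw [htn n, ← ha, ← hb]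
      field_simp
      ring
    rw [hinterp]
    -- the inequality
    have hRg0 : (0:ℝ) < R ^ g0 := Real.rpow_pos_of_pos hR0 _
    have h2M : (0:ℝ) < (2:ℝ) ^ M := Real.rpow_pos_of_pos two_pos _
    have h2g1 : (0:ℝ) < (2:ℝ) ^ g1 := Real.rpow_pos_of_pos two_pos _
    set En : ℝ := Real.exp (Real.log R * (g1 - g0)) with hEndef
    have hEq : R ^ (g1 - g0) = En := Real.rpow_def_of_pos hR0 _
    have h5 : R ^ g1 = R ^ g0 * En := by
      rw [← hEq, ← Real.rpow_add hR0]; ring_nf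
    have hsg1 : R ^ g0 * En / 2 ^ M ≤ s ^ g1 := by
      calc R ^ g0 * En / 2 ^ M = R ^ g1 / 2 ^ M := by rw [h5]
        _ ≤ R ^ g1 / 2 ^ g1 := by
            apply div_le_div_of_nonneg_left (Real.rpow_nonneg hR0.le _) h2g1
            exact Real.rpow_le_rpow_of_exponent_le one_le_two hg1M
        _ = (R / 2) ^ g1 := (Real.div_rpow hR0.le (by norm_num) _).symm
        _ ≤ s ^ g1 := Real.rpow_le_rpow (by positivity) hsR hg1.le
    have hcs : 0 ≤ c * s ^ g2 := mul_nonneg hc.1.le (Real.rpow_nonneg hs0.le _)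
    have key : (K * M + 1) * 2 ^ M < (1 - c) * En := by
      rw [div_lt_iff₀ (by linarith [hc.2] : (0:ℝ) < 1 - c)] at hEn
      linarith
    rw [lt_div_iff₀ (by positivity)]
    have key2 : K * M + 1 < (1 - c) * En / 2 ^ M := by
      rw [lt_div_iff₀ h2M]; linarith
    have h6 : (K * M + 1) * R ^ g0 < ((1 - c) * En / 2 ^ M) * R ^ g0 :=
      mul_lt_mul_of_pos_right key2 hRg0
    have h9 : ((1 - c) * En / 2 ^ M) * R ^ g0 = (1 - c) * (R ^ g0 * En / 2 ^ M) := by ring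
    have h7 : (1 - c) * (R ^ g0 * En / 2 ^ M) ≤ (1 - c) * s ^ g1 :=
      mul_le_mul_of_nonneg_left hsg1 (by linarith [hc.2])
    have h8 : K * (g0 * R ^ g0) ≤ K * M * R ^ g0 := by
      rw [← mul_assoc]
      exact mul_le_mul_of_nonneg_right (mul_le_mul_of_nonneg_left hg0M hK.le) hRg0.le
    have h10 : (K * M + 1) * R ^ g0 = K * M * R ^ g0 + R ^ g0 := by ring
    linarith
  -- squeeze argument
  have hlow : ∀ᶠ n in atTop, 1 - P (B n) ≤ P {ω |
      K < (linInterp (jn n) (t n) (fun u => W n ω ^ γ u) (tn n)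
            - ((n : ℝ) / (k n : ℝ)) ^ γ (tn n))
          / (γ (tn n) * ((n : ℝ) / (k n : ℝ)) ^ γ (tn n))} := by
    filter_upwards [hsub] with n hsn
    refine tsub_le_iff_right.2 ?_
    calc (1:ENNReal) = P univ := measure_univ.symm
      _ = P ((B n)ᶜ ∪ B n) := by rw [compl_union_self]
      _ ≤ P (B n)ᶜ + P (B n) := measure_union_le _ _
      _ ≤ P {ω |
          K < (linInterp (jn n) (t n) (fun u => W n ω ^ γ u) (tn n)
                - ((n : ℝ) / (k n : ℝ)) ^ γ (tn n))
              / (γ (tn n) * ((n : ℝ) / (k n : ℝ)) ^ γ (tn n))} + P (B n) :=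
          add_le_add_left (measure_mono hsn) _
  have hone : Tendsto (fun n => (1:ENNReal) - P (B n)) atTop (𝓝 1) := by
    have h := ENNReal.Tendsto.sub (tendsto_const_nhds (x := (1:ENNReal))) hB
      (Or.inl (by norm_num))
    simpa using h
  exact tendsto_of_tendsto_of_tendsto_of_le_of_le' hone tendsto_const_nhds hlow
    (Eventually.of_forall fun n => prob_le_one)
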